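/- For real x ≥ |y| > 0, the sum ∑_{k=0}^{∞} y²/(y² + (x+k)²) is strictly greater than y²/(2x). -/

import Mathlib

set_option maxHeartbeats 800000

theorem sum_gt_one (x y : ℝ) (hxy : |y| ≤ x) (hy : y ≠ 0) :
    (∑' k : ℕ, y ^ 2 / (y ^ 2 + (x + k) ^ 2)) > y ^ 2 / (2 * x) := by
  have hx : 0 < x := lt_of_lt_of_le (abs_pos.mpr hy) hxy
  have hy2 : 0 < y ^ 2 := by positivity
  have hya : y ^ 2 ≤ x ^ 2 := by
    have := sq_abs y
    nlinarith [abs_nonneg y]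
  set f : ℕ → ℝ := fun k => y ^ 2 / (y ^ 2 + (x + k) ^ 2) with hf
  set g : ℕ → ℝ := fun k => y ^ 2 / (2 * (x + k)) - y ^ 2 / (2 * (x + k + 1)) with hg
  have hxk : ∀ k : ℕ, 0 < x + k := fun k => by positivity
  -- g has sum y^2/(2x)
  have hgnn : ∀ k : ℕ, 0 ≤ g k := by
    intro k
    have h1 : 0 < 2 * (x + k) := by positivity
    have h2 : 2 * (x + k) ≤ 2 * (x + k + 1) := by linarith
    have := div_le_div_of_nonneg_left hy2.le h1 h2
    simp only [hg]
    linarith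
  have hsum : HasSum g (y ^ 2 / (2 * x)) := by
    rw [hasSum_iff_tendsto_nat_of_nonneg hgnn]
    have key : ∀ n : ℕ, ∑ i ∈ Finset.range n, g i
        = y ^ 2 / (2 * x) - y ^ 2 / (2 * (x + n)) := by
      intro n
      have := Finset.sum_range_sub' (fun i : ℕ => y ^ 2 / (2 * (x + i))) n
      simp only [hg]
      convert this using 2 <;> push_cast <;> ring_nf
    simp only [key]
    have h1 : Filter.Tendsto (fun n : ℕ => y ^ 2 / (2 * (x + n))) Filter.atTop (nhds 0) := by
      apply Filter.Tendsto.div_atTop (tendsto_const_nhds)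
      apply Filter.Tendsto.const_mul_atTop (by norm_num : (0:ℝ) < 2)
      exact Filter.tendsto_atTop_add_const_left _ x tendsto_natCast_atTop_atTop
    have := h1.const_sub (y ^ 2 / (2 * x))
    simpa using this
  -- pointwise strict inequality g < f
  have hlt : ∀ k : ℕ, g k < f k := by
    intro k
    have hk := hxk k
    have hxk2 : y ^ 2 ≤ (x + k) ^ 2 := by nlinarith [Nat.cast_nonneg (α := ℝ) k]
    have hgk : g k = y ^ 2 / (2 * (x + k) * (x + k + 1)) := by
      simp only [hg]
      field_simp
      ring
    rw [hgk, hf]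
    apply div_lt_div_of_pos_left hy2 (by positivity)
    nlinarith
  -- summability of f
  have hfsum : Summable f := by
    rw [← summable_nat_add_iff 1]
    apply Summable.of_nonneg_of_le (fun k => by positivity)
      (f := fun k : ℕ => y ^ 2 * (1 / ((k:ℝ) + 1) ^ 2))
    · intro k
      have hk1 : (0:ℝ) < (k:ℝ) + 1 := by positivity
      have h1 : ((k:ℝ) + 1) ^ 2 ≤ y ^ 2 + (x + (k + 1 : ℕ)) ^ 2 := by
        push_cast
        nlinarith [sq_nonneg y]
      have h2 : y ^ 2 / (y ^ 2 + (x + ((k + 1 : ℕ):ℝ)) ^ 2) ≤ y ^ 2 / ((k:ℝ) + 1) ^ 2 :=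
        div_le_div_of_nonneg_left hy2.le (by positivity) h1
      simpa [hf, mul_one_div, div_eq_mul_inv] using h2
    · apply Summable.mul_left
      have : Summable (fun n : ℕ => 1 / ((n:ℝ)) ^ 2) :=
        Real.summable_one_div_nat_pow.mpr (by norm_num)
      have := (summable_nat_add_iff 1).mpr this
      simpa using this
  calc y ^ 2 / (2 * x) = ∑' k, g k := hsum.tsum_eq.symm
    _ < ∑' k, f k := Summable.tsum_lt_tsum (i := 0) (fun k => (hlt k).le) (hlt 0) hsum.summable hfsum
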